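/- Let k be a field of characteristic p > 2, q a positive multiple of p, and S = k⟨x,y⟩/(yx − xy − (1/2)x²). Let g act on S as the algebra automorphism determined by g·x = x, g·y = x + y. With α = −y^{p−2} + ∑_{i=1}^{p−2}(−1)^{i+1}((i+1)!/2^{i+1}) x^i y^{p−2−i}, one has ∑_{s=0}^{q−1} g^s·α = 0 in S. -/

import Mathlib

open Finset

section Aux

variable (k : Type*) [Field k] (p : ℕ)

/-- Sums of `d`-th powers of `0,…,q-1` vanish in char `p` when `d ≤ p-2` and `p ∣ q`. -/
lemma aux_sum_pow (hp : p.Prime) (hp2 : 2 < p) [CharP k p]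
    (q : ℕ) (hpq : p ∣ q) (d : ℕ) (hd : d ≤ p - 2) :
    ∑ s ∈ range q, ((s : k)) ^ d = 0 := by
  haveI : Fact p.Prime := ⟨hp⟩
  have hZ : ∑ s ∈ range p, ((s : ZMod p)) ^ d = 0 := by
    have hbij : ∑ s ∈ range p, ((s : ZMod p)) ^ d = ∑ x : ZMod p, x ^ d := by
      refine Finset.sum_nbij' (fun s => ((s : ZMod p))) (fun x => x.val)
        (fun a _ => Finset.mem_univ _) (fun a _ => Finset.mem_range.2 (ZMod.val_lt a))
        (fun a ha => ZMod.val_cast_of_lt (Finset.mem_range.1 ha))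
        (fun a _ => ZMod.natCast_rightInverse a)
        (fun a _ => rfl)
    rw [hbij]
    exact FiniteField.sum_pow_lt_card_sub_one (ZMod p) d (by rw [ZMod.card]; omega)
  have hper : ∀ a s : ℕ, ((p * a + s : ℕ) : k) = (s : k) := by
    intro a s
    push_cast
    rw [CharP.cast_eq_zero k p]
    ring
  have hp' : ∑ s ∈ range p, ((s : k)) ^ d = 0 := by
    have : ∑ s ∈ range p, ((s : k)) ^ d
        = (ZMod.castHom (dvd_refl p) k) (∑ s ∈ range p, ((s : ZMod p)) ^ d) := by
      rw [map_sum]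
      refine Finset.sum_congr rfl fun s _ => ?_
      rw [map_pow, map_natCast]
    rw [this, hZ, map_zero]
  obtain ⟨m, rfl⟩ := hpq
  induction m with
  | zero => simp
  | succ n ih =>
    rw [Nat.mul_succ, Finset.sum_range_add, ih]
    rw [zero_add]
    calc ∑ s ∈ range p, ((p * n + s : ℕ) : k) ^ d
        = ∑ s ∈ range p, ((s : k)) ^ d := by
          refine Finset.sum_congr rfl fun s _ => by rw [hper]
      _ = 0 := hp'

/-- Sums of values of a polynomial of degree `≤ p-2` over `0,…,q-1` vanish. -/
lemma aux_sum_eval (hp : p.Prime) (hp2 : 2 < p) [CharP k p]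
    (q : ℕ) (hpq : p ∣ q) (F : Polynomial k) (hF : F.natDegree ≤ p - 2) :
    ∑ s ∈ range q, F.eval ((s : k)) = 0 := by
  have heval : ∀ t : k, F.eval t
      = ∑ i ∈ range (p - 2 + 1), F.coeff i * t ^ i := by
    intro t
    rw [Polynomial.eval_eq_sum_range' (by omega : F.natDegree < p - 2 + 1)]
  calc ∑ s ∈ range q, F.eval ((s : k))
      = ∑ s ∈ range q, ∑ i ∈ range (p - 2 + 1), F.coeff i * ((s : k)) ^ i := by
        exact Finset.sum_congr rfl fun s _ => heval _
    _ = ∑ i ∈ range (p - 2 + 1), F.coeff i * ∑ s ∈ range q, ((s : k)) ^ i := by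
        rw [Finset.sum_comm]
        exact Finset.sum_congr rfl fun i _ => by rw [Finset.mul_sum]
    _ = 0 := by
        refine Finset.sum_eq_zero fun i hi => ?_
        rw [aux_sum_pow k p hp hp2 q hpq i (by have := Finset.mem_range.1 hi; omega),
          mul_zero]

/-- Sums over `0,…,q-1` of the shifted products vanish. -/
lemma aux_sum_prod (hp : p.Prime) (hp2 : 2 < p) [CharP k p]
    (q : ℕ) (hpq : p ∣ q) (j : ℕ) (hj : j ≤ p - 2) :
    ∑ s ∈ range q, ∏ i ∈ range j, (((s : k)) + (i : k) * (2 : k)⁻¹) = 0 := by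
  have := aux_sum_eval k p hp hp2 q hpq
    (∏ i ∈ range j, (Polynomial.X + Polynomial.C ((i : k) * (2 : k)⁻¹)))
    (le_trans (le_trans (Polynomial.natDegree_prod_le _ _)
      (le_trans (Finset.sum_le_card_nsmul _ _ 1 fun i _ =>
        le_of_eq (Polynomial.natDegree_X_add_C _)) (by simp))) hj)
  simpa [Polynomial.eval_prod] using this

end Aux

section Ring

variable {k : Type*} [Field k] {S : Type*} [Ring S] [Algebra k S] {x y : S}

lemma aux_comm (hrel : y * x = x * y + (2 : k)⁻¹ • x ^ 2) :
    ∀ j : ℕ, y * x ^ j = x ^ j * y + ((j : k) * (2 : k)⁻¹) • x ^ (j + 1) := by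
  intro j
  induction j with
  | zero => simp
  | succ j ih =>
    have h0 : y * x ^ (j + 1) = (y * x ^ j) * x := by rw [mul_assoc, ← pow_succ]
    rw [h0, ih, add_mul, smul_mul_assoc, mul_assoc, hrel, mul_add, ← mul_assoc,
      ← pow_succ, mul_smul_comm]
    have e1 : x ^ j * x ^ 2 = x ^ (j + 1 + 1) := by rw [← pow_add]
    have e2 : x ^ (j + 1) * x = x ^ (j + 1 + 1) := (pow_succ x (j + 1)).symm
    rw [e1, e2, add_assoc, ← add_smul]
    congr 2
    push_cast
    ring

/-- Expansion of `(y + t•x)^m`. -/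
lemma aux_expand (hrel : y * x = x * y + (2 : k)⁻¹ • x ^ 2) (t : k) (m : ℕ) :
    (y + t • x) ^ m
      = ∑ j ∈ range (m + 1),
          ((m.choose j : k) * ∏ i ∈ range j, (t + (i : k) * (2 : k)⁻¹)) •
            (x ^ j * y ^ (m - j)) := by
  induction m with
  | zero => simp
  | succ m ih =>
    have key : ∀ j e : ℕ, (y + t • x) * (x ^ j * y ^ e)
        = x ^ j * y ^ (e + 1) + (t + (j : k) * (2 : k)⁻¹) • (x ^ (j + 1) * y ^ e) := by
      intro j e
      have h1 : y * (x ^ j * y ^ e)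
          = x ^ j * y ^ (e + 1) + ((j : k) * (2 : k)⁻¹) • (x ^ (j + 1) * y ^ e) := by
        rw [← mul_assoc, aux_comm hrel j, add_mul, smul_mul_assoc, mul_assoc, ← pow_succ']
      have h2 : (t • x) * (x ^ j * y ^ e) = t • (x ^ (j + 1) * y ^ e) := by
        rw [smul_mul_assoc, ← mul_assoc, ← pow_succ']
      rw [add_mul, h1, h2, add_smul]
      abel
    rw [pow_succ', ih, Finset.mul_sum]
    have step : ∀ j ∈ range (m + 1),
        (y + t • x) * (((m.choose j : k) * ∏ i ∈ range j, (t + (i : k) * (2 : k)⁻¹)) •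
          (x ^ j * y ^ (m - j)))
        = ((m.choose j : k) * ∏ i ∈ range j, (t + (i : k) * (2 : k)⁻¹)) •
            (x ^ j * y ^ (m + 1 - j))
          + ((m.choose j : k) * (t + (j : k) * (2 : k)⁻¹) *
              ∏ i ∈ range j, (t + (i : k) * (2 : k)⁻¹)) •
            (x ^ (j + 1) * y ^ (m - j)) := by
      intro j hj
      have hjm : j ≤ m := by have := Finset.mem_range.1 hj; omega
      rw [mul_smul_comm, key j (m - j)]
      have : m - j + 1 = m + 1 - j := by omega
      rw [this, smul_add, smul_smul]
      congr 2
      ring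
    rw [Finset.sum_congr rfl step, Finset.sum_add_distrib]
    -- rewrite target sum via sum_range_succ'
    rw [Finset.sum_range_succ' (fun j =>
      (((m + 1).choose j : k) * ∏ i ∈ range j, (t + (i : k) * (2 : k)⁻¹)) •
        (x ^ j * y ^ (m + 1 - j))) (m + 1)]
    -- rewrite first sum: extend to range (m+2) then shift
    have hext : ∑ j ∈ range (m + 1),
        ((m.choose j : k) * ∏ i ∈ range j, (t + (i : k) * (2 : k)⁻¹)) •
          (x ^ j * y ^ (m + 1 - j))
        = ∑ j ∈ range (m + 2),
        ((m.choose j : k) * ∏ i ∈ range j, (t + (i : k) * (2 : k)⁻¹)) •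
          (x ^ j * y ^ (m + 1 - j)) := by
      symm
      rw [Finset.sum_range_succ]
      simp [Nat.choose_succ_self]
    rw [hext, Finset.sum_range_succ' (fun j =>
      ((m.choose j : k) * ∏ i ∈ range j, (t + (i : k) * (2 : k)⁻¹)) •
        (x ^ j * y ^ (m + 1 - j))) (m + 1)]
    rw [add_right_comm, ← Finset.sum_add_distrib]
    congr 1
    · refine Finset.sum_congr rfl fun j hj => ?_
      have h1 : m + 1 - (j + 1) = m - j := by omega
      rw [h1, ← add_smul]
      congr 1
      rw [Finset.prod_range_succ, Nat.choose_succ_succ]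
      push_cast
      ring
    · simp

end Ring

theorem stmt16 (k : Type*) [Field k] (p : ℕ) (hp : p.Prime) (hp2 : 2 < p) [CharP k p]
    (q : ℕ) (hq : 0 < q) (hpq : p ∣ q)
    (S : Type*) [Ring S] [Algebra k S] (x y : S)
    (hrel : y * x = x * y + (2 : k)⁻¹ • x ^ 2)
    (g : S ≃ₐ[k] S) (hgx : g x = x) (hgy : g y = x + y) :
    ∑ s ∈ Finset.range q,
      (g ^ s) (-(y ^ (p - 2)) +
        ∑ i ∈ Finset.Icc 1 (p - 2),
          (((-1 : k) ^ (i + 1) * ((i + 1).factorial : k)) / 2 ^ (i + 1)) •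
            (x ^ i * y ^ (p - 2 - i))) = 0 := by
  -- action of powers of g
  have hgsx : ∀ s : ℕ, (g ^ s) x = x := by
    intro s
    induction s with
    | zero => simp
    | succ s ih => rw [pow_succ', AlgEquiv.mul_apply, ih, hgx]
  have hgsy : ∀ s : ℕ, (g ^ s) y = y + (s : k) • x := by
    intro s
    induction s with
    | zero => simp
    | succ s ih =>
      rw [pow_succ, AlgEquiv.mul_apply, hgy, map_add, hgsx, ih]
      push_cast
      rw [add_smul, one_smul]
      abel
  -- key vanishing lemma
  have key : ∀ m : ℕ, m ≤ p - 2 → ∑ s ∈ Finset.range q, (y + (s : k) • x) ^ m = 0 := by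
    intro m hm
    have : ∀ s : ℕ, (y + (s : k) • x) ^ m
        = ∑ j ∈ range (m + 1),
            ((m.choose j : k) * ∏ i ∈ range j, ((s : k) + (i : k) * (2 : k)⁻¹)) •
              (x ^ j * y ^ (m - j)) := fun s => aux_expand hrel ((s : k)) m
    rw [Finset.sum_congr rfl fun s _ => this s, Finset.sum_comm]
    refine Finset.sum_eq_zero fun j hj => ?_
    have hjp : j ≤ p - 2 := by have := Finset.mem_range.1 hj; omega
    rw [← Finset.sum_smul]
    have : ∑ s ∈ range q,
        ((m.choose j : k) * ∏ i ∈ range j, ((s : k) + (i : k) * (2 : k)⁻¹))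
        = (m.choose j : k) * ∑ s ∈ range q, ∏ i ∈ range j, ((s : k) + (i : k) * (2 : k)⁻¹) := by
      rw [Finset.mul_sum]
    rw [this, aux_sum_prod k p hp hp2 q hpq j hjp, mul_zero, zero_smul]
  -- expand the application of g ^ s
  have happ : ∀ s : ℕ, (g ^ s) (-(y ^ (p - 2)) +
        ∑ i ∈ Finset.Icc 1 (p - 2),
          (((-1 : k) ^ (i + 1) * ((i + 1).factorial : k)) / 2 ^ (i + 1)) •
            (x ^ i * y ^ (p - 2 - i)))
      = -((y + (s : k) • x) ^ (p - 2)) +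
        ∑ i ∈ Finset.Icc 1 (p - 2),
          (((-1 : k) ^ (i + 1) * ((i + 1).factorial : k)) / 2 ^ (i + 1)) •
            (x ^ i * (y + (s : k) • x) ^ (p - 2 - i)) := by
    intro s
    rw [map_add, map_neg, map_pow, hgsy, map_sum]
    congr 1
    refine Finset.sum_congr rfl fun i _ => ?_
    rw [map_smul, map_mul, map_pow, map_pow, hgsx, hgsy]
  rw [Finset.sum_congr rfl fun s _ => happ s, Finset.sum_add_distrib]
  have h1 : ∑ s ∈ Finset.range q, -((y + (s : k) • x) ^ (p - 2)) = 0 := by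
    rw [Finset.sum_neg_distrib, key (p - 2) le_rfl, neg_zero]
  have h2 : ∑ s ∈ Finset.range q, ∑ i ∈ Finset.Icc 1 (p - 2),
      (((-1 : k) ^ (i + 1) * ((i + 1).factorial : k)) / 2 ^ (i + 1)) •
        (x ^ i * (y + (s : k) • x) ^ (p - 2 - i)) = 0 := by
    rw [Finset.sum_comm]
    refine Finset.sum_eq_zero fun i _ => ?_
    have : ∑ s ∈ Finset.range q,
        (((-1 : k) ^ (i + 1) * ((i + 1).factorial : k)) / 2 ^ (i + 1)) •
          (x ^ i * (y + (s : k) • x) ^ (p - 2 - i))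
        = (((-1 : k) ^ (i + 1) * ((i + 1).factorial : k)) / 2 ^ (i + 1)) •
          (x ^ i * ∑ s ∈ Finset.range q, (y + (s : k) • x) ^ (p - 2 - i)) := by
      rw [Finset.mul_sum, Finset.smul_sum]
    rw [this, key (p - 2 - i) (by omega), mul_zero, smul_zero]
  rw [h1, h2, add_zero]
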